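/- Let φ := xz and ψ := yz. (i) For any constant real symmetric invertible 3×3 matrix g, the vector field X := ((g₁₂g₃₃−g₁₃g₂₃)x + (g₂₂g₃₃−g₂₃²)y) ∂/∂x + ((g₁₃²−g₁₁g₃₃)x + (g₁₃g₂₃−g₁₂g₃₃)y) ∂/∂y + ((g₁₁g₂₃−g₁₂g₁₃)x + (g₁₂g₂₃−g₁₃g₂₂)y) ∂/∂z satisfies X(u) = 0 and X(v) = 0 on ℝ³, where u := g₁₃x + g₂₃y + g₃₃z and v := ½(g₁₁g₃₃−g₁₃²)x² + (g₁₂g₃₃−g₁₃g₂₃)xy + ½(g₂₂g₃₃−g₂₃²)y². (ii) If moreover g₁₃ = g₂₃ = 0, then [X, Z0'] = 0, where Z0' := −x ∂/∂x − y ∂/∂y + z ∂/∂z (a rescaling of ∇φ × ∇ψ on z ≠ 0). -/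

import Mathlib

noncomputable section

/-- Partial derivative `∂f/∂xⁱ` at `p`. -/
def pd (i : Fin 3) (f : (Fin 3 → ℝ) → ℝ) (p : Fin 3 → ℝ) : ℝ :=
  fderiv ℝ f p (Pi.single i 1)

/-- Gradient of a scalar function. -/
def grad (f : (Fin 3 → ℝ) → ℝ) (p : Fin 3 → ℝ) : Fin 3 → ℝ :=
  fun i => pd i f p

/-- Directional derivative `Σᵢ vⁱ ∂f/∂xⁱ` of `f` along the vector `v` at `p`. -/
def dd (v : Fin 3 → ℝ) (f : (Fin 3 → ℝ) → ℝ) (p : Fin 3 → ℝ) : ℝ :=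
  ∑ i, v i * pd i f p

/-- `(∇_W W)ⁱ = Σⱼ Wʲ ∂Wⁱ/∂xʲ`. -/
def nab (W : (Fin 3 → ℝ) → (Fin 3 → ℝ)) (p : Fin 3 → ℝ) : Fin 3 → ℝ :=
  fun i => ∑ j, W p j * pd j (fun q => W q i) p

/-- Euclidean cross product on `ℝ³`. -/
def cross (a b : Fin 3 → ℝ) : Fin 3 → ℝ :=
  ![a 1 * b 2 - a 2 * b 1, a 2 * b 0 - a 0 * b 2, a 0 * b 1 - a 1 * b 0]

/-- `g(v,w) = Σᵢⱼ gᵢⱼ vⁱ wʲ`. -/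
def gB (g : Matrix (Fin 3) (Fin 3) ℝ) (v w : Fin 3 → ℝ) : ℝ :=
  ∑ i, ∑ j, g i j * v i * w j

/-- Lie bracket of vector fields: `[V,W]ⁱ = Σⱼ (Vʲ ∂Wⁱ/∂xʲ − Wʲ ∂Vⁱ/∂xʲ)`. -/
def lieB (V W : (Fin 3 → ℝ) → (Fin 3 → ℝ)) (p : Fin 3 → ℝ) : Fin 3 → ℝ :=
  fun i => ∑ j, (V p j * pd j (fun q => W q i) p - W p j * pd j (fun q => V q i) p)

/-- curl of a vector field on `ℝ³`. -/
def curl (a : (Fin 3 → ℝ) → (Fin 3 → ℝ)) (p : Fin 3 → ℝ) : Fin 3 → ℝ :=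
  ![pd 1 (fun q => a q 2) p - pd 2 (fun q => a q 1) p,
    pd 2 (fun q => a q 0) p - pd 0 (fun q => a q 2) p,
    pd 0 (fun q => a q 1) p - pd 1 (fun q => a q 0) p]

/-- divergence of a vector field. -/
def divg (W : (Fin 3 → ℝ) → (Fin 3 → ℝ)) (p : Fin 3 → ℝ) : ℝ :=
  ∑ i, pd i (fun q => W q i) p

/-- Euclidean inner product on `ℝ³`. -/
def ip (a b : Fin 3 → ℝ) : ℝ := ∑ i, a i * b i

set_option linter.unusedVariables false

section pdLemmas

variable {p : Fin 3 → ℝ} {i : Fin 3} {f g' : (Fin 3 → ℝ) → ℝ} {c : ℝ}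

lemma pd_coord (i j : Fin 3) (p : Fin 3 → ℝ) :
    pd i (fun q => q j) p = if i = j then 1 else 0 := by
  rw [pd, (hasFDerivAt_apply (𝕜 := ℝ) j p).fderiv]
  simp [Pi.single_apply, eq_comm]

lemma pd_const : pd i (fun _ => c) p = 0 := by
  unfold pd; rw [fderiv_fun_const]; rfl

lemma pd_add (hf : DifferentiableAt ℝ f p) (hg : DifferentiableAt ℝ g' p) :
    pd i (fun q => f q + g' q) p = pd i f p + pd i g' p := by
  unfold pd; rw [fderiv_fun_add hf hg]; rfl

lemma pd_mul (hf : DifferentiableAt ℝ f p) (hg : DifferentiableAt ℝ g' p) :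
    pd i (fun q => f q * g' q) p = f p * pd i g' p + g' p * pd i f p := by
  unfold pd; rw [fderiv_fun_mul hf hg]; rfl

lemma pd_const_mul (hf : DifferentiableAt ℝ f p) :
    pd i (fun q => c * f q) p = c * pd i f p := by
  unfold pd; rw [fderiv_const_mul hf]; rfl

lemma pd_neg : pd i (fun q => -f q) p = -pd i f p := by
  unfold pd; rw [fderiv_fun_neg]; rfl

lemma diff_coord (j : Fin 3) : DifferentiableAt ℝ (fun q : Fin 3 → ℝ => q j) p :=
  (hasFDerivAt_apply (𝕜 := ℝ) j p).differentiableAt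

end pdLemmas

/-- Example 3: for `φ = xz`, `ψ = yz`:
(i) `X(u) = X(v) = 0` on `ℝ³` for the indicated `X`, `u`, `v`;
(ii) if `g₁₃ = g₂₃ = 0` then `[X, Z0'] = 0` where `Z0' = (−x, −y, z)`. -/
theorem example3_case1a1
    (g : Matrix (Fin 3) (Fin 3) ℝ) (hsym : g.IsSymm) (hinv : IsUnit g.det)
    (φ ψ : (Fin 3 → ℝ) → ℝ)
    (hφ : φ = fun p => p 0 * p 2) (hψ : ψ = fun p => p 1 * p 2)
    (X : (Fin 3 → ℝ) → (Fin 3 → ℝ))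
    (hX : X = fun p =>
      ![(g 0 1 * g 2 2 - g 0 2 * g 1 2) * p 0 + (g 1 1 * g 2 2 - g 1 2 ^ 2) * p 1,
        (g 0 2 ^ 2 - g 0 0 * g 2 2) * p 0 + (g 0 2 * g 1 2 - g 0 1 * g 2 2) * p 1,
        (g 0 0 * g 1 2 - g 0 1 * g 0 2) * p 0 + (g 0 1 * g 1 2 - g 0 2 * g 1 1) * p 1])
    (u v : (Fin 3 → ℝ) → ℝ)
    (hu : u = fun p => g 0 2 * p 0 + g 1 2 * p 1 + g 2 2 * p 2)
    (hv : v = fun p => 1/2 * (g 0 0 * g 2 2 - g 0 2 ^ 2) * p 0 ^ 2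
                        + (g 0 1 * g 2 2 - g 0 2 * g 1 2) * p 0 * p 1
                        + 1/2 * (g 1 1 * g 2 2 - g 1 2 ^ 2) * p 1 ^ 2)
    (Z0' : (Fin 3 → ℝ) → (Fin 3 → ℝ))
    (hZ0' : Z0' = fun p => ![-(p 0), -(p 1), p 2]) :
    (∀ p : Fin 3 → ℝ, dd (X p) u p = 0 ∧ dd (X p) v p = 0) ∧
    (g 0 2 = 0 → g 1 2 = 0 → ∀ p : Fin 3 → ℝ, lieB X Z0' p = 0) := by
  subst hX hu hv hZ0'
  constructor
  · intro p
    constructor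
    · simp only [dd, Fin.sum_univ_three, Matrix.cons_val_zero, Matrix.cons_val_one,
        Matrix.head_cons, Matrix.cons_val_two, Matrix.tail_cons]
      simp (disch := fun_prop) only [pd_add, pd_const_mul, pd_coord, pd_const, diff_coord]
      simp only [Fin.reduceEq, reduceIte]
      ring
    · simp only [dd, Fin.sum_univ_three, Matrix.cons_val_zero, Matrix.cons_val_one,
        Matrix.head_cons, Matrix.cons_val_two, Matrix.tail_cons, pow_two]
      simp (disch := fun_prop) only [pd_add, pd_const_mul, pd_mul, pd_coord, pd_const, diff_coord]
      simp only [Fin.reduceEq, reduceIte]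
      ring
  · intro h02 h12 p
    have h3 : ∀ f : Fin 3 → ℝ, f 0 = 0 → f 1 = 0 → f 2 = 0 → f = (0 : Fin 3 → ℝ) := by
      intro f h0 h1 h2
      funext i
      fin_cases i <;> assumption
    refine h3 _ ?_ ?_ ?_ <;>
      simp only [lieB, Fin.sum_univ_three, Matrix.cons_val_zero,
        Matrix.cons_val_one, Matrix.head_cons, Matrix.cons_val_two, Matrix.tail_cons,
        h02, h12] <;>
      simp (disch := fun_prop) only [pd_add, pd_const_mul, pd_neg, pd_coord, pd_const,
        diff_coord] <;>
      simp only [Fin.reduceEq, reduceIte] <;> ring
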